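/- Let U, V, W be left Noetherian K-Banach algebras, P a (U,V)-bimodule finitely generated as a left U-module, Q a (V,W)-bimodule finitely generated as a left V-module. Suppose the algebra maps V^op → End_U(P) and W^op → End_V(Q) are continuous (for the canonical Banach topologies on finitely generated modules). Then P ⊗_V Q is a finitely generated left U-module and the induced map W^op → End_U(P ⊗_V Q) is continuous. -/

import Mathlib

open scoped TensorProduct
open MulOpposite

section BalancedTensor

variable (V : Type*) [Ring V]

/-- The relations defining the balanced tensor product `P ⊗_V Q` of a right `V`-module `P`
and a left `V`-module `Q` as a quotient of `P ⊗_ℤ Q`; here the span is taken over a ring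
`U` acting on the left of `P`, commuting with the right `V`-action, so that the quotient
is a left `U`-module. -/
noncomputable def tensorRelU (U : Type*) [Ring U] (P Q : Type*) [AddCommGroup P]
    [Module U P] [Module Vᵐᵒᵖ P] [AddCommGroup Q] [Module V Q] :
    Submodule U (P ⊗[ℤ] Q) :=
  Submodule.span U
    {z | ∃ (p : P) (s : V) (q : Q), z = (op s • p) ⊗ₜ[ℤ] q - p ⊗ₜ[ℤ] (s • q)}

/-- The balanced tensor product `P ⊗_V Q`, as a left `U`-module. -/
noncomputable abbrev RTensorU (U : Type*) [Ring U] (P Q : Type*) [AddCommGroup P]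
    [Module U P] [Module Vᵐᵒᵖ P] [AddCommGroup Q] [Module V Q] : Type _ :=
  (P ⊗[ℤ] Q) ⧸ tensorRelU V U P Q

/-- The right action of `w ∈ W` on `P ⊗_V Q` induced by a right `W`-action on `Q`
commuting with the `V`-action. -/
noncomputable def RTensorU.actRight (U : Type*) [Ring U] (P Q : Type*) [AddCommGroup P]
    [Module U P] [Module Vᵐᵒᵖ P] [AddCommGroup Q] [Module V Q]
    (W : Type*) [Ring W] [Module Wᵐᵒᵖ Q] [SMulCommClass Wᵐᵒᵖ V Q] (w : W) :
    RTensorU V U P Q →ₗ[U] RTensorU V U P Q :=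
  Submodule.mapQ _ _
    { toFun := LinearMap.lTensor P
        ((DistribMulAction.toAddMonoidHom Q (op w)).toIntLinearMap)
      map_add' := by intro a b; exact map_add _ a b
      map_smul' := by
        intro u x
        induction x using TensorProduct.induction_on with
        | zero => simp
        | tmul p q => simp [TensorProduct.smul_tmul']
        | add a b ha hb => simp only [smul_add, map_add, RingHom.id_apply] at ha hb ⊢; rw [ha, hb] }
    (by
      unfold tensorRelU
      rw [Submodule.span_le]
      rintro z ⟨p, s, q, rfl⟩
      apply Submodule.mem_comap.2
      apply Submodule.subset_span
      refine ⟨p, s, op w • q, ?_⟩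
      simp [map_sub, smul_comm])

end BalancedTensor

section Lattices

variable (K : Type*) [NontriviallyNormedField K]

/-- The "unit lattice" spanned by a finite set `X` inside a module `P` over a normed
algebra `U`: all finite sums `Σ cᵢ • xᵢ` with `‖cᵢ‖ ≤ 1` and `xᵢ ∈ X`.  For `X` a finite
generating set this defines the canonical Banach topology of the finitely generated
module `P`. -/
def unitLattice (U P : Type*) [NormedRing U] [AddCommGroup P] [Module U P]
    (X : Finset P) : Set P :=
  {p | ∃ (k : ℕ) (c : Fin k → U) (y : Fin k → P),
    (∀ i, ‖c i‖ ≤ 1 ∧ y i ∈ X) ∧ p = ∑ i, c i • y i}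

/-- Continuity of the map `Vᵒᵖ → End_U(P)` for the canonical Banach topologies:
there are a finite generating set `X` of `P` over `U` and a nonzero constant `c ∈ K` such
that `𝒰X𝒱 ⊆ c⁻¹? 𝒰X`, i.e. the unit ball of `V` moves the unit lattice `𝒰X` into a fixed
`K`-rescaling of itself.  (Here the right action of `V` is given by the `Vᵐᵒᵖ`-module
structure.) -/
def RightActionBounded (U V P : Type*) [NormedRing U] [NormedAlgebra K U]
    [NormedRing V] [AddCommGroup P] [Module U P] [Module Vᵐᵒᵖ P] : Prop :=
  ∃ X : Finset P, Submodule.span U (X : Set P) = ⊤ ∧ ∃ c : K, c ≠ 0 ∧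
    ∀ p ∈ unitLattice U P X, ∀ v : V, ‖v‖ ≤ 1 →
      ∃ q ∈ unitLattice U P X, op v • p = algebraMap K U c • q

end Lattices


/-- A bounded combination: `p = ∑ cᵢ • yᵢ` with `‖cᵢ‖ ≤ C` and `yᵢ ∈ X`. -/
def BddComb (R : Type*) {M : Type*} [NormedRing R] [AddCommGroup M] [Module R M]
    (C : ℝ) (X : Set M) (p : M) : Prop :=
  ∃ (k : ℕ) (c : Fin k → R) (y : Fin k → M),
    (∀ i, ‖c i‖ ≤ C ∧ y i ∈ X) ∧ p = ∑ i, c i • y i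

section BddCombLemmas

variable {R M : Type*} [NormedRing R] [AddCommGroup M] [Module R M]
  {C C' D : ℝ} {X : Set M} {p q : M}

theorem bddComb_zero : BddComb R C X (0 : M) :=
  ⟨0, fun i => 0, fun i => 0, fun i => i.elim0, by simp⟩

theorem bddComb_single {c : R} {x : M} (hc : ‖c‖ ≤ C) (hx : x ∈ X) :
    BddComb R C X (c • x) :=
  ⟨1, fun _ => c, fun _ => x, fun _ => ⟨hc, hx⟩, by simp⟩

theorem BddComb.add (hp : BddComb R C X p) (hq : BddComb R C X q) :
    BddComb R C X (p + q) := by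
  obtain ⟨k, c, y, hcy, rfl⟩ := hp
  obtain ⟨l, d, z, hdz, rfl⟩ := hq
  refine ⟨k + l, Fin.append c d, Fin.append y z, ?_, ?_⟩
  · intro i
    refine Fin.addCases (fun j => ?_) (fun j => ?_) i
    · simpa [Fin.append_left] using hcy j
    · simpa [Fin.append_right] using hdz j
  · rw [Fin.sum_univ_add]
    simp [Fin.append_left, Fin.append_right]

theorem BddComb.mono (h : C ≤ C') (hp : BddComb R C X p) : BddComb R C' X p := by
  obtain ⟨k, c, y, hcy, rfl⟩ := hp
  exact ⟨k, c, y, fun i => ⟨(hcy i).1.trans h, (hcy i).2⟩, rfl⟩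

theorem BddComb.smul {u : R} (hu : ‖u‖ ≤ D) (hp : BddComb R C X p) :
    BddComb R (D * C) X (u • p) := by
  obtain ⟨k, c, y, hcy, rfl⟩ := hp
  refine ⟨k, fun i => u * c i, y, fun i => ⟨?_, (hcy i).2⟩, ?_⟩
  · exact (norm_mul_le _ _).trans
      (mul_le_mul hu (hcy i).1 (norm_nonneg _) ((norm_nonneg u).trans hu))
  · rw [Finset.smul_sum]
    exact Finset.sum_congr rfl fun i _ => by rw [smul_smul]

theorem bddComb_sum {ι : Type*} (s : Finset ι) (f : ι → M)
    (h : ∀ i ∈ s, BddComb R C X (f i)) : BddComb R C X (∑ i ∈ s, f i) :=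
  Finset.sum_induction f (BddComb R C X) (fun _ _ => BddComb.add) bddComb_zero h

end BddCombLemmas

/-- existence of nonzero elements with small algebraMap norm -/
theorem exists_small_algebraMap (K A : Type*) [NontriviallyNormedField K]
    [NormedRing A] [NormedAlgebra K A] {ε : ℝ} (hε : 0 < ε) :
    ∃ s : K, s ≠ 0 ∧ ‖algebraMap K A s‖ ≤ ε := by
  have h1 : (0:ℝ) < ε / (‖(1:A)‖ + 1) := div_pos hε (by positivity)
  obtain ⟨x, hx0, hxlt⟩ := NormedField.exists_norm_lt K h1
  refine ⟨x, norm_pos_iff.1 hx0, ?_⟩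
  rw [norm_algebraMap]
  calc ‖x‖ * ‖(1:A)‖ ≤ (ε / (‖(1:A)‖ + 1)) * (‖(1:A)‖ + 1) := by
        apply mul_le_mul hxlt.le (by linarith) (norm_nonneg _) (le_of_lt h1)
      _ = ε := div_mul_cancel₀ ε (by positivity)

section TensorLemmas

variable (V : Type*) [Ring V] (U : Type*) [Ring U] (P Q : Type*) [AddCommGroup P]
    [Module U P] [Module Vᵐᵒᵖ P] [AddCommGroup Q] [Module V Q]

theorem RTensorU.mk_rel (p : P) (s : V) (q : Q) :
    (Submodule.Quotient.mk ((op s • p) ⊗ₜ[ℤ] q) : RTensorU V U P Q) =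
      Submodule.Quotient.mk (p ⊗ₜ[ℤ] (s • q)) := by
  rw [Submodule.Quotient.eq]
  exact Submodule.subset_span ⟨p, s, q, rfl⟩

theorem RTensorU.actRight_mk (W : Type*) [Ring W] [Module Wᵐᵒᵖ Q]
    [SMulCommClass Wᵐᵒᵖ V Q] (w : W) (p : P) (q : Q) :
    RTensorU.actRight V U P Q W w (Submodule.Quotient.mk (p ⊗ₜ[ℤ] q)) =
      (Submodule.Quotient.mk (p ⊗ₜ[ℤ] (op w • q)) : RTensorU V U P Q) := by
  unfold RTensorU.actRight
  rw [Submodule.mapQ_apply]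
  rfl

end TensorLemmas


theorem mkq_sum {R M : Type*} [Ring R] [AddCommGroup M] [Module R M]
    (p : Submodule R M) {ι : Type*} (s : Finset ι) (f : ι → M) :
    (Submodule.Quotient.mk (∑ i ∈ s, f i) : M ⧸ p) =
      ∑ i ∈ s, (Submodule.Quotient.mk (f i) : M ⧸ p) := by
  exact map_sum p.mkQ f s

/-- Let `U`, `V`, `W` be left Noetherian Banach `K`-algebras over a
complete nonarchimedean field `K`, `P` a `(U,V)`-bimodule finitely generated as a left
`U`-module, and `Q` a `(V,W)`-bimodule finitely generated as a left `V`-module.  Suppose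
the maps `Vᵒᵖ → End_U(P)` and `Wᵒᵖ → End_V(Q)` are continuous for the canonical Banach
topologies on finitely generated modules (expressed via unit lattices).  Then `P ⊗_V Q`
is a finitely generated left `U`-module and the induced map `Wᵒᵖ → End_U(P ⊗_V Q)` is
continuous. -/
theorem tensor_of_bimodules_finite_and_bounded
    {K : Type*} [NontriviallyNormedField K] [CompleteSpace K]
    {U V W : Type*}
    [NormedRing U] [NormedAlgebra K U] [CompleteSpace U] [IsNoetherianRing U]
    [NormedRing V] [NormedAlgebra K V] [CompleteSpace V] [IsNoetherianRing V]
    [NormedRing W] [NormedAlgebra K W] [CompleteSpace W] [IsNoetherianRing W]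
    (P : Type*) [AddCommGroup P] [Module U P] [Module Vᵐᵒᵖ P]
    [SMulCommClass Vᵐᵒᵖ U P] [Module.Finite U P]
    (Q : Type*) [AddCommGroup Q] [Module V Q] [Module Wᵐᵒᵖ Q]
    [SMulCommClass Wᵐᵒᵖ V Q] [Module.Finite V Q]
    (hP : RightActionBounded K U V P) (hQ : RightActionBounded K V W Q) :
    Module.Finite U (RTensorU V U P Q) ∧
    (∃ X : Finset (RTensorU V U P Q),
      Submodule.span U (X : Set (RTensorU V U P Q)) = ⊤ ∧ ∃ c : K, c ≠ 0 ∧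
      ∀ p ∈ unitLattice U (RTensorU V U P Q) X, ∀ w : W, ‖w‖ ≤ 1 →
        ∃ q ∈ unitLattice U (RTensorU V U P Q) X,
          RTensorU.actRight V U P Q W w p = algebraMap K U c • q) := by
  classical
  obtain ⟨XP, hXP, cP, hcP0, hPb⟩ := hP
  obtain ⟨XQ, hXQ, cQ, hcQ0, hQb⟩ := hQ
  obtain ⟨s, hs0, hsV⟩ := exists_small_algebraMap K V (ε := 1) one_pos
  obtain ⟨s', hs'0, hs'U⟩ := exists_small_algebraMap K U (ε := 1) one_pos
  -- Fact Q : the action of small w on generators of Q has uniformly bounded coefficients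
  have factQ : ∀ w : W, ‖w‖ ≤ 1 → ∀ y ∈ XQ,
      BddComb V ‖algebraMap K V (s⁻¹ * cQ)‖ (↑XQ) (op w • y) := by
    intro w hw y hy
    have hmem : algebraMap K V s • y ∈ unitLattice V Q XQ :=
      ⟨1, fun _ => algebraMap K V s, fun _ => y, fun _ => ⟨hsV, hy⟩, by simp⟩
    obtain ⟨q, hq, heq⟩ := hQb _ hmem w hw
    have hcomm : op w • (algebraMap K V s • y) = algebraMap K V s • (op w • y) :=
      smul_comm _ _ _
    rw [hcomm] at heq
    have h2 : op w • y = algebraMap K V (s⁻¹ * cQ) • q := by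
      have h3 := congrArg (fun z => algebraMap K V s⁻¹ • z) heq
      simpa [smul_smul, ← map_mul, inv_mul_cancel₀ hs0] using h3
    obtain ⟨k, d, ys, hdy, hsum⟩ := hq
    refine ⟨k, fun j => algebraMap K V (s⁻¹ * cQ) * d j, ys, fun j => ⟨?_, (hdy j).2⟩, ?_⟩
    · refine (norm_mul_le _ _).trans ?_
      have := mul_le_mul_of_nonneg_left (hdy j).1
        (norm_nonneg (algebraMap K V (s⁻¹ * cQ)))
      simpa using this
    · rw [h2, hsum, Finset.smul_sum]
      exact Finset.sum_congr rfl fun j _ => by rw [smul_smul]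
  set CQ : ℝ := ‖algebraMap K V (s⁻¹ * cQ)‖ with hCQdef
  have hCQ0 : (0:ℝ) ≤ CQ := norm_nonneg _
  -- choose r making (algebraMap r) * v small for ‖v‖ ≤ CQ
  obtain ⟨r, hr0, hrV⟩ := exists_small_algebraMap K V (ε := 1/(CQ+1)) (by positivity)
  have hrCQ : ∀ v : V, ‖v‖ ≤ CQ → ‖algebraMap K V r * v‖ ≤ 1 := by
    intro v hv
    refine (norm_mul_le _ _).trans ?_
    calc ‖algebraMap K V r‖ * ‖v‖ ≤ (1/(CQ+1)) * (CQ+1) :=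
          mul_le_mul hrV (hv.trans (by linarith)) (norm_nonneg _) (by positivity)
      _ = 1 := one_div_mul_cancel (by positivity)
  -- uniform representation of op (algebraMap r⁻¹) • x for x ∈ XP
  have hrho0 : ∀ x ∈ XP, ∃ C : ℝ, 0 ≤ C ∧
      BddComb U C (↑XP) (op (algebraMap K V r⁻¹) • x) := by
    intro x hx
    have hmem : op (algebraMap K V r⁻¹) • x ∈ Submodule.span U (↑XP : Set P) := by
      rw [hXP]; trivial
    obtain ⟨f, -, hf⟩ := Submodule.mem_span_finset.1 hmem
    refine ⟨∑ i ∈ XP, ‖f i‖, Finset.sum_nonneg fun _ _ => norm_nonneg _, ?_⟩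
    rw [← hf]
    exact bddComb_sum _ _ fun i hi =>
      bddComb_single (Finset.single_le_sum (fun j _ => norm_nonneg (f j)) hi) hi
  have hrho : ∃ Crho : ℝ, 0 ≤ Crho ∧ ∀ x ∈ XP,
      BddComb U Crho (↑XP) (op (algebraMap K V r⁻¹) • x) := by
    choose C hC0 hCb using hrho0
    refine ⟨∑ x ∈ XP.attach, C x x.2, Finset.sum_nonneg fun i _ => hC0 _ _, ?_⟩
    intro x hx
    exact (hCb x hx).mono (Finset.single_le_sum (f := fun i : XP => C i i.2)
      (fun i _ => hC0 _ _) (Finset.mem_attach _ ⟨x, hx⟩))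
  obtain ⟨Crho, hCrho0, hrhob⟩ := hrho
  -- Fact P : bounded representation of op v • x for ‖v‖ ≤ CQ, x ∈ XP
  have factP : ∀ v : V, ‖v‖ ≤ CQ → ∀ x ∈ XP,
      BddComb U (‖algebraMap K U (s'⁻¹ * cP)‖ * Crho) (↑XP) (op v • x) := by
    intro v hv x hx
    have hmem : algebraMap K U s' • x ∈ unitLattice U P XP :=
      ⟨1, fun _ => algebraMap K U s', fun _ => x, fun _ => ⟨hs'U, hx⟩, by simp⟩
    obtain ⟨q, hq, heq⟩ := hPb _ hmem (algebraMap K V r * v) (hrCQ v hv)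
    rw [smul_comm] at heq
    have h1 : op (algebraMap K V r * v) • x = algebraMap K U (s'⁻¹ * cP) • q := by
      have h3 := congrArg (fun z => algebraMap K U s'⁻¹ • z) heq
      simpa [smul_smul, ← map_mul, inv_mul_cancel₀ hs'0] using h3
    have hop : (op v : Vᵐᵒᵖ) = op (algebraMap K V r⁻¹) * op (algebraMap K V r * v) := by
      rw [← op_mul]
      congr 1
      symm
      calc algebraMap K V r * v * algebraMap K V r⁻¹
          = algebraMap K V r * (algebraMap K V r⁻¹ * v) := by
            rw [mul_assoc, ← Algebra.commutes r⁻¹ v]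
        _ = v := by rw [← mul_assoc, ← map_mul, mul_inv_cancel₀ hr0, map_one, one_mul]
    have h2 : op v • x =
        algebraMap K U (s'⁻¹ * cP) • (op (algebraMap K V r⁻¹) • q) := by
      rw [hop, mul_smul, h1, smul_comm]
    rw [h2]
    obtain ⟨k, e, xs, hex, hsum⟩ := hq
    have hq' : BddComb U (1 * Crho) (↑XP) (op (algebraMap K V r⁻¹) • q) := by
      rw [hsum, Finset.smul_sum]
      refine bddComb_sum _ _ fun i _ => ?_
      rw [smul_comm]
      exact (hrhob (xs i) (hex i).2).smul (hex i).1
    exact (hq'.smul (le_refl ‖algebraMap K U (s'⁻¹ * cP)‖)).mono (le_of_eq (by ring))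
  -- the generating set of the tensor product
  set X : Finset (RTensorU V U P Q) :=
    (XP ×ˢ XQ).image (fun z => Submodule.Quotient.mk (z.1 ⊗ₜ[ℤ] z.2)) with hXdef
  have hXmem : ∀ x ∈ XP, ∀ y ∈ XQ,
      (Submodule.Quotient.mk (x ⊗ₜ[ℤ] y) : RTensorU V U P Q) ∈ X := by
    intro x hx y hy
    exact Finset.mem_image.2 ⟨(x, y), Finset.mem_product.2 ⟨hx, hy⟩, rfl⟩
  -- spanning
  have key : ∀ q : Q, ∀ p : P,
      (Submodule.Quotient.mk (p ⊗ₜ[ℤ] q) : RTensorU V U P Q) ∈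
        Submodule.span U (↑X : Set (RTensorU V U P Q)) := by
    intro q
    have hq : q ∈ Submodule.span V (↑XQ : Set Q) := by rw [hXQ]; trivial
    induction hq using Submodule.span_induction with
    | mem y hy =>
      intro p
      have hp : p ∈ Submodule.span U (↑XP : Set P) := by rw [hXP]; trivial
      induction hp using Submodule.span_induction with
      | mem x hx => exact Submodule.subset_span (hXmem x hx y hy)
      | zero => rw [TensorProduct.zero_tmul]; simp
      | add a b _ _ ha hb =>
        rw [TensorProduct.add_tmul, Submodule.Quotient.mk_add]
        exact add_mem ha hb
      | smul u a _ ha =>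
        rw [← TensorProduct.smul_tmul', Submodule.Quotient.mk_smul]
        exact Submodule.smul_mem _ u ha
    | zero =>
      intro p
      rw [TensorProduct.tmul_zero]
      simp
    | add q1 q2 _ _ h1 h2 =>
      intro p
      rw [TensorProduct.tmul_add, Submodule.Quotient.mk_add]
      exact add_mem (h1 p) (h2 p)
    | smul v q' _ h =>
      intro p
      rw [← RTensorU.mk_rel V U P Q p v q']
      exact h (op v • p)
  have hspan : Submodule.span U (↑X : Set (RTensorU V U P Q)) = ⊤ := by
    rw [Submodule.eq_top_iff']
    intro z
    obtain ⟨t, rfl⟩ := Submodule.Quotient.mk_surjective _ z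
    induction t using TensorProduct.induction_on with
    | zero => simp
    | tmul p q => exact key q p
    | add a b ha hb => rw [Submodule.Quotient.mk_add]; exact add_mem ha hb
  set Cst : ℝ := ‖algebraMap K U (s'⁻¹ * cP)‖ * Crho with hCstdef
  have hCst0 : (0:ℝ) ≤ Cst := mul_nonneg (norm_nonneg _) hCrho0
  -- bounded action on generators
  have keyB : ∀ w : W, ‖w‖ ≤ 1 → ∀ x ∈ XP, ∀ y ∈ XQ,
      BddComb U Cst (↑X : Set (RTensorU V U P Q))
        (RTensorU.actRight V U P Q W w (Submodule.Quotient.mk (x ⊗ₜ[ℤ] y))) := by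
    intro w hw x hx y hy
    rw [RTensorU.actRight_mk]
    obtain ⟨k, d, ys, hdy, hsum⟩ := factQ w hw y hy
    rw [hsum, TensorProduct.tmul_sum, mkq_sum]
    refine bddComb_sum _ _ fun j _ => ?_
    rw [← RTensorU.mk_rel V U P Q x (d j) (ys j)]
    obtain ⟨m, e, xs, hex, hsum2⟩ := factP (d j) (hdy j).1 x hx
    rw [hsum2, TensorProduct.sum_tmul, mkq_sum]
    refine bddComb_sum _ _ fun i _ => ?_
    rw [← TensorProduct.smul_tmul', Submodule.Quotient.mk_smul]
    exact bddComb_single (hex i).1 (hXmem (xs i) (hex i).2 (ys j) (hdy j).2)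
  -- final constant
  obtain ⟨c', hc'0, hc'⟩ := exists_small_algebraMap K U (ε := 1/(Cst+1)) (by positivity)
  have hc'le : ‖algebraMap K U c'‖ * Cst ≤ 1 := by
    calc ‖algebraMap K U c'‖ * Cst ≤ (1/(Cst+1)) * (Cst+1) :=
          mul_le_mul hc' (by linarith) hCst0 (by positivity)
      _ = 1 := one_div_mul_cancel (by positivity)
  refine ⟨⟨⟨X, hspan⟩⟩, X, hspan, c'⁻¹, inv_ne_zero hc'0, ?_⟩
  intro p hp w hw
  have hB : BddComb U Cst (↑X : Set (RTensorU V U P Q))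
      (RTensorU.actRight V U P Q W w p) := by
    obtain ⟨k, cc, zz, hcz, rfl⟩ := hp
    rw [map_sum]
    refine bddComb_sum _ _ fun i _ => ?_
    rw [map_smul]
    obtain ⟨⟨x, y⟩, hxy, hzz⟩ := Finset.mem_image.1 (hcz i).2
    rw [← hzz]
    exact (((keyB w hw x (Finset.mem_product.1 hxy).1 y
      (Finset.mem_product.1 hxy).2).smul (hcz i).1)).mono (le_of_eq (one_mul _))
  refine ⟨algebraMap K U c' • (RTensorU.actRight V U P Q W w p), ?_, ?_⟩
  · exact (hB.smul (le_refl ‖algebraMap K U c'‖)).mono hc'le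
  · rw [smul_smul, ← map_mul, inv_mul_cancel₀ hc'0, map_one, one_smul]
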